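/- Let G be a countable ICC group and let X ⊆ G be a finite symmetric subset containing the identity with |X| ≥ 2. Then there exist a configuration s ∈ 2^G and a finite symmetric subset Y ⊆ G with X ⊆ Y such that: (1) for every a, b ∈ G, if s(a) = s(b) = 1 then a and b are X-apart; (2) for every g, h ∈ Y^100 (the set of products of 100 elements of Y) there exists a ∈ Y with s(g·a) = s(h·a) = 1. -/

import Mathlib

open scoped Pointwise

/-- A group is ICC if it is nontrivial and every non-identity element has an infinite
conjugacy class. -/
def IsICC (G : Type*) [Group G] : Prop :=
  Nontrivial G ∧ ∀ g : G, g ≠ 1 → {h : G | IsConj g h}.Infinite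

/-- For a finite symmetric `X ⊆ G`, elements `a, b ∈ G` are `X`-apart if `a⁻¹ * b ∉ X`. -/
def XApart {G : Type*} [Group G] (X : Finset G) (a b : G) : Prop :=
  a⁻¹ * b ∉ X

namespace FTVAux

variable {G : Type} [Group G] [DecidableEq G]

lemma icc_infinite (hICC : IsICC G) : Infinite G := by
  obtain ⟨g, hg⟩ := @exists_ne G hICC.1 1
  exact Set.infinite_univ_iff.mp ((hICC.2 g hg).mono (Set.subset_univ _))

lemma centralizer_not_finiteIndex (hICC : IsICC G) {z : G} (hz : z ≠ 1) :
    ¬ (Subgroup.centralizer {z} : Subgroup G).FiniteIndex := by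
  intro hfin
  have hH : (Subgroup.centralizer {z} : Subgroup G) = Subgroup.centralizer {z} := rfl
  haveI : Finite (G ⧸ (Subgroup.centralizer {z} : Subgroup G)) :=
    @Subgroup.finite_quotient_of_finiteIndex G _ _ hfin
  have key : ∀ (a b : G), a⁻¹ * b ∈ (Subgroup.centralizer {z} : Subgroup G) →
      a * z * a⁻¹ = b * z * b⁻¹ := by
    intro a b hab
    have hcomm : (a⁻¹ * b) * z = z * (a⁻¹ * b) :=
      Subgroup.mem_centralizer_singleton_iff.mp hab
    have hb : b = a * (a⁻¹ * b) := by group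
    rw [hb]
    have h2 : (a⁻¹ * b) * z * (a⁻¹ * b)⁻¹ = z := by
      rw [hcomm]; group
    calc a * z * a⁻¹ = a * ((a⁻¹ * b) * z * (a⁻¹ * b)⁻¹) * a⁻¹ := by rw [h2]
      _ = a * (a⁻¹ * b) * z * (a * (a⁻¹ * b))⁻¹ := by group
  let f : G ⧸ (Subgroup.centralizer {z} : Subgroup G) → G := fun q =>
    Quotient.liftOn q (fun a => a * z * a⁻¹)
      (fun a b hab => key a b (QuotientGroup.leftRel_apply.mp hab))
  have hsurj : {h : G | IsConj z h} ⊆ Set.range f := by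
    intro h hh
    rw [Set.mem_setOf_eq, isConj_iff] at hh
    obtain ⟨c, hc⟩ := hh
    exact ⟨QuotientGroup.mk c, hc⟩
  exact (hICC.2 z hz) ((Set.finite_range f).subset hsurj)

/-- Neumann-type avoidance: one can avoid a finite set and finitely many
conjugation conditions. -/
lemma avoid (hICC : IsICC G) (F : Finset G) (C : Finset (G × G))
    (hC : ∀ p ∈ C, p.1 ≠ 1) :
    ∃ t : G, t ∉ F ∧ ∀ p ∈ C, t * p.1 * t⁻¹ ≠ p.2 := by
  classical
  by_contra hcon
  push_neg at hcon
  haveI : Infinite G := icc_infinite hICC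
  -- build a coset cover
  set ι := (G ⊕ (G × G)) with hι
  set s : Finset ι := F.image Sum.inl ∪ C.image Sum.inr with hs
  set Hf : ι → Subgroup G := fun i =>
    match i with
    | .inl _ => ⊥
    | .inr p => Subgroup.centralizer {p.1} with hHf
  set gf : ι → G := fun i =>
    match i with
    | .inl a => a
    | .inr p => if h : ∃ t : G, t * p.1 * t⁻¹ = p.2 then h.choose else 1 with hgf
  have hcovers : ⋃ i ∈ s, (gf i) • ((Hf i : Subgroup G) : Set G) = Set.univ := by
    rw [Set.eq_univ_iff_forall]
    intro y
    rw [Set.mem_iUnion₂]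
    by_cases hy : y ∈ F
    · refine ⟨Sum.inl y, ?_, ?_⟩
      · rw [hs, Finset.mem_union]
        exact Or.inl (Finset.mem_image_of_mem _ hy)
      · show y ∈ y • ((⊥ : Subgroup G) : Set G)
        rw [mem_leftCoset_iff]
        simp
    · obtain ⟨p, hp, hyp⟩ := hcon y hy
      have hex : ∃ t : G, t * p.1 * t⁻¹ = p.2 := ⟨y, hyp⟩
      refine ⟨Sum.inr p, ?_, ?_⟩
      · rw [hs, Finset.mem_union]
        exact Or.inr (Finset.mem_image_of_mem _ hp)
      · show y ∈ (gf (Sum.inr p)) • ((Subgroup.centralizer {p.1} : Subgroup G) : Set G)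
        have hgfp : gf (Sum.inr p) = hex.choose := by
          simp only [hgf, dif_pos hex]
        rw [hgfp, mem_leftCoset_iff, SetLike.mem_coe,
          Subgroup.mem_centralizer_singleton_iff]
        have h1 : hex.choose * p.1 * hex.choose⁻¹ = p.2 := hex.choose_spec
        have h2 : y * p.1 * y⁻¹ = p.2 := hyp
        set t₀ := hex.choose
        have : t₀ * p.1 * t₀⁻¹ = y * p.1 * y⁻¹ := by rw [h1, h2]
        calc (t₀⁻¹ * y) * p.1 = t₀⁻¹ * (y * p.1 * y⁻¹) * y := by group
          _ = t₀⁻¹ * (t₀ * p.1 * t₀⁻¹) * y := by rw [this]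
          _ = p.1 * (t₀⁻¹ * y) := by group
  obtain ⟨i, hi, hfin⟩ := Subgroup.exists_finiteIndex_of_leftCoset_cover hcovers
  match i with
  | .inl a =>
      have : (⊥ : Subgroup G).index = 0 := by
        rw [Subgroup.index_bot]
        exact Nat.card_eq_zero_of_infinite
      exact hfin.index_ne_zero this
  | .inr p =>
      have hpC : p ∈ C := by
        rw [hs, Finset.mem_union] at hi
        rcases hi with hi | hi
        · simp at hi
        · obtain ⟨q, hq, hqe⟩ := Finset.mem_image.mp hi
          rw [Sum.inr.injEq] at hqe
          exact hqe ▸ hq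
      exact centralizer_not_finiteIndex hICC (hC p hpC) hfin

end FTVAux

namespace FTVAux2
set_option linter.unusedSectionVars false

variable {G : Type} [Group G] [DecidableEq G]

variable (X : Finset G)

def prevs (v : ℕ → G) (j : ℕ) : Finset G := (Finset.range j).image v

def base (v : ℕ → G) (j : ℕ) : Finset G :=
  insert (1:G) (X ∪ prevs v j ∪ (prevs v j)⁻¹)

def ball (v : ℕ → G) (j n : ℕ) : Finset G := (base X v j) ^ n

def GoodSeq (v : ℕ → G) (m : ℕ) : Prop :=
  ∀ j < m, v j ∉ ball X v j 8 ∧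
    ∀ z ∈ X * X, z ≠ 1 → v j * z * (v j)⁻¹ ∉ ball X v j 6

variable {X}

lemma prevs_congr {v v' : ℕ → G} {j : ℕ} (h : ∀ i < j, v i = v' i) :
    prevs v j = prevs v' j :=
  Finset.image_congr (fun i hi => h i (Finset.mem_range.mp hi))

lemma ball_congr {v v' : ℕ → G} {j n : ℕ} (h : ∀ i < j, v i = v' i) :
    ball X v j n = ball X v' j n := by
  unfold ball base
  rw [prevs_congr h]

lemma one_mem_base {v : ℕ → G} {j : ℕ} : (1:G) ∈ base X v j :=
  Finset.mem_insert_self _ _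

lemma X_subset_base {v : ℕ → G} {j : ℕ} : X ⊆ base X v j := fun x hx =>
  Finset.mem_insert_of_mem (Finset.mem_union_left _ (Finset.mem_union_left _ hx))

lemma v_mem_base {v : ℕ → G} {i j : ℕ} (h : i < j) : v i ∈ base X v j :=
  Finset.mem_insert_of_mem (Finset.mem_union_left _ (Finset.mem_union_right _
    (Finset.mem_image_of_mem v (Finset.mem_range.mpr h))))

lemma vinv_mem_base {v : ℕ → G} {i j : ℕ} (h : i < j) : (v i)⁻¹ ∈ base X v j := by
  refine Finset.mem_insert_of_mem (Finset.mem_union_right _ ?_)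
  rw [Finset.mem_inv']
  rw [inv_inv]
  exact Finset.mem_image_of_mem v (Finset.mem_range.mpr h)

lemma ball_mul_mem {v : ℕ → G} {j m n : ℕ} {a b : G}
    (ha : a ∈ ball X v j m) (hb : b ∈ ball X v j n) : a * b ∈ ball X v j (m + n) := by
  unfold ball at *
  rw [pow_add]
  exact Finset.mul_mem_mul ha hb

lemma mem_ball_one {v : ℕ → G} {j : ℕ} {a : G} (ha : a ∈ base X v j) :
    a ∈ ball X v j 1 := by
  unfold ball; rwa [pow_one]

lemma ball_succ {v : ℕ → G} {j m : ℕ} :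
    ball X v j m ⊆ ball X v j (m + 1) := by
  intro a ha
  have : a * 1 ∈ ball X v j (m + 1) := ball_mul_mem ha (mem_ball_one one_mem_base)
  simpa using this

lemma ball_mono {v : ℕ → G} {j m n : ℕ} (h : m ≤ n) :
    ball X v j m ⊆ ball X v j n := by
  obtain ⟨k, rfl⟩ := Nat.le.dest h
  clear h
  induction k with
  | zero => exact fun a ha => ha
  | succ k ih => exact ih.trans ball_succ

lemma XX_mem_ball {v : ℕ → G} {j : ℕ} {z : G} (hz : z ∈ X * X) :
    z ∈ ball X v j 2 := by
  unfold ball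
  rw [pow_two]
  exact Finset.mul_subset_mul X_subset_base X_subset_base hz

lemma inv_mem_XX (hXsym : ∀ x ∈ X, x⁻¹ ∈ X) {z : G} (hz : z ∈ X * X) :
    z⁻¹ ∈ X * X := by
  obtain ⟨x, hx, y, hy, rfl⟩ := Finset.mem_mul.mp hz
  rw [mul_inv_rev]
  exact Finset.mul_mem_mul (hXsym y hy) (hXsym x hx)

/-- product shape `a * z` -/
lemma P1 {v : ℕ → G} {j : ℕ} {a z : G} (ha : a ∈ base X v j) (hz : z ∈ X * X) :
    a * z ∈ ball X v j 8 :=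
  ball_mono (by norm_num) (ball_mul_mem (mem_ball_one ha) (XX_mem_ball hz))

/-- product shape `a * z * b`, in the small ball -/
lemma P2 {v : ℕ → G} {j : ℕ} {a z b : G} (ha : a ∈ base X v j) (hz : z ∈ X * X)
    (hb : b ∈ base X v j) : a * z * b ∈ ball X v j 6 :=
  ball_mono (by norm_num)
    (ball_mul_mem (ball_mul_mem (mem_ball_one ha) (XX_mem_ball hz)) (mem_ball_one hb))

/-- product shape `a * z * b * c * z'` -/
lemma P3 {v : ℕ → G} {j : ℕ} {a z b c z' : G} (ha : a ∈ base X v j) (hz : z ∈ X * X)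
    (hb : b ∈ base X v j) (hc : c ∈ base X v j) (hz' : z' ∈ X * X) :
    a * z * b * c * z' ∈ ball X v j 8 :=
  ball_mono (by norm_num)
    (ball_mul_mem (ball_mul_mem (ball_mul_mem (ball_mul_mem
      (mem_ball_one ha) (XX_mem_ball hz)) (mem_ball_one hb)) (mem_ball_one hc))
      (XX_mem_ball hz'))

end FTVAux2

-- appended to part2 for testing
section Part3
open FTVAux2

variable {G : Type} [Group G] [DecidableEq G]
variable {X : Finset G}

set_option linter.unusedSectionVars false

lemma exists_goodSeq (hICC : IsICC G) (X : Finset G) :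
    ∀ m : ℕ, ∃ v : ℕ → G, GoodSeq X v m := by
  intro m
  induction m with
  | zero => exact ⟨fun _ => 1, fun j hj => absurd hj (Nat.not_lt_zero j)⟩
  | succ m ih =>
      obtain ⟨v, hv⟩ := ih
      obtain ⟨t, ht1, ht2⟩ := FTVAux.avoid hICC (ball X v m 8)
        (((X * X).filter (· ≠ (1:G))) ×ˢ ball X v m 6)
        (by
          intro p hp
          rw [Finset.mem_product] at hp
          exact (Finset.mem_filter.mp hp.1).2)
      refine ⟨Function.update v m t, ?_⟩
      have hagree : ∀ j, j ≤ m → ∀ i < j, Function.update v m t i = v i := by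
        intro j hj i hi
        exact Function.update_of_ne (by omega) _ _
      intro j hj
      rcases Nat.lt_succ_iff_lt_or_eq.mp hj with hjm | hjeq
      · have e1 : ∀ n, ball X (Function.update v m t) j n = ball X v j n :=
          fun n => ball_congr (hagree j (le_of_lt hjm))
        have e2 : Function.update v m t j = v j := Function.update_of_ne (by omega) _ _
        rw [e1, e1, e2]
        exact hv j hjm
      · rw [hjeq]
        have e1 : ∀ n, ball X (Function.update v m t) m n = ball X v m n :=
          fun n => ball_congr (hagree m le_rfl)
        have e2 : Function.update v m t m = t := Function.update_self _ _ _
        rw [e1, e1, e2]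
        constructor
        · exact ht1
        · intro z hz hzne hmem
          exact ht2 (z, t * z * t⁻¹)
            (Finset.mem_product.mpr
              ⟨Finset.mem_filter.mpr ⟨hz, hzne⟩, hmem⟩) rfl

variable {v : ℕ → G} {M : ℕ}

lemma core (hgood : GoodSeq X v M) (hXsym : ∀ x ∈ X, x⁻¹ ∈ X)
    {k l k' l' : ℕ} (hk : k < M)
    {z z' : G} (hz : z ∈ X * X) (hz' : z' ∈ X * X)
    (hE : v k * z * (v l)⁻¹ = v k' * z' * (v l')⁻¹)
    (hu : v k * z * (v l)⁻¹ ≠ 1)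
    (hlk : l ≤ k) (hk'k : k' ≤ k) (hl'k : l' ≤ k)
    (h1 : k ≠ k') (h2 : k ≠ l') : False := by
  have hk'lt : k' < k := lt_of_le_of_ne hk'k (Ne.symm h1)
  have hl'lt : l' < k := lt_of_le_of_ne hl'k (Ne.symm h2)
  by_cases hlkeq : l = k
  · subst hlkeq
    have hzne : z ≠ 1 := by
      intro h
      rw [h] at hu
      exact hu (by group)
    have hmem : v l * z * (v l)⁻¹ ∈ ball X v l 6 := by
      rw [hE]
      exact P2 (v_mem_base hk'lt) hz' (vinv_mem_base hl'lt)
    exact (hgood l hk).2 z hz hzne hmem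
  · have hllt : l < k := lt_of_le_of_ne hlk hlkeq
    have h0 : v k = (v k * z * (v l)⁻¹) * v l * z⁻¹ := by group
    rw [hE] at h0
    have hmem : v k' * z' * (v l')⁻¹ * v l * z⁻¹ ∈ ball X v k 8 :=
      P3 (v_mem_base hk'lt) hz' (vinv_mem_base hl'lt) (v_mem_base hllt)
        (inv_mem_XX hXsym hz)
    exact (hgood k hk).1 (h0 ▸ hmem)

lemma cross (hgood : GoodSeq X v M) (hXsym : ∀ x ∈ X, x⁻¹ ∈ X)
    {k l k' l' : ℕ} (hk : k < M) (hl : l < M) (hk' : k' < M) (hl' : l' < M)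
    {z z' : G} (hz : z ∈ X * X) (hz' : z' ∈ X * X)
    (hE : v k * z * (v l)⁻¹ = v k' * z' * (v l')⁻¹)
    (hu : v k * z * (v l)⁻¹ ≠ 1) :
    k = k' ∨ l = l' ∨ k = l' ∨ l = k' := by
  by_contra hcon
  push_neg at hcon
  obtain ⟨n1, n2, n3, n4⟩ := hcon
  have hEinv : v l * z⁻¹ * (v k)⁻¹ = v l' * z'⁻¹ * (v k')⁻¹ := by
    have := congrArg (·⁻¹) hE
    simp only [mul_inv_rev, inv_inv] at this
    calc v l * z⁻¹ * (v k)⁻¹ = v l * (z⁻¹ * (v k)⁻¹) := by group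
      _ = v l' * (z'⁻¹ * (v k')⁻¹) := by
          rw [← mul_assoc, ← mul_assoc] at this ⊢
          exact this
      _ = v l' * z'⁻¹ * (v k')⁻¹ := by group
  have huinv : v l * z⁻¹ * (v k)⁻¹ ≠ 1 := by
    intro h
    apply hu
    have : (v k * z * (v l)⁻¹)⁻¹ = 1 := by
      rw [← h]; group
    rwa [inv_eq_one] at this
  have hzi := inv_mem_XX hXsym hz
  have hz'i := inv_mem_XX hXsym hz'
  rcases (show (l ≤ k ∧ k' ≤ k ∧ l' ≤ k) ∨ (k ≤ l ∧ k' ≤ l ∧ l' ≤ l) ∨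
      (k ≤ k' ∧ l ≤ k' ∧ l' ≤ k') ∨ (k ≤ l' ∧ l ≤ l' ∧ k' ≤ l') from by omega)
    with h | h | h | h
  · exact core hgood hXsym hk hz hz' hE hu h.1 h.2.1 h.2.2 n1 n3
  · exact core hgood hXsym hl hzi hz'i hEinv huinv h.1 h.2.2 h.2.1 n2 n4
  · exact core hgood hXsym hk' hz' hz hE.symm (hE ▸ hu) h.2.2 h.1 h.2.1
      (Ne.symm n1) (Ne.symm n4)
  · exact core hgood hXsym hl' hz'i hzi hEinv.symm (hEinv ▸ huinv) h.2.2 h.2.1 h.1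
      (Ne.symm n2) (Ne.symm n3)

lemma sameside (hgood : GoodSeq X v M) (hXsym : ∀ x ∈ X, x⁻¹ ∈ X)
    {k l : ℕ} (hk : k < M) (hl : l < M) (hne : k ≠ l)
    {z : G} (hz : z ∈ X * X) : v l ≠ v k * z := by
  intro h
  rcases lt_or_gt_of_ne hne with hkl | hlk
  · exact (hgood l hl).1 (h ▸ P1 (v_mem_base hkl) hz)
  · have : v k = v l * z⁻¹ := by rw [h]; group
    exact (hgood k hk).1 (this ▸ P1 (v_mem_base hlk) (inv_mem_XX hXsym hz))
end Part3
section Part4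
variable {G : Type} [Group G] [DecidableEq G]
set_option linter.unusedSectionVars false

lemma counting {C : ℕ} :
    ∀ (L : List (Finset G × Finset G)) (Λ : Finset G),
      (∀ p ∈ L, p.1 ⊆ Λ ∧ p.2 ⊆ p.1 ∧ p.1.card = C) →
      L.Pairwise (fun p p' => Disjoint p.1 p'.1) →
      (Λ.powerset.filter (fun T => ∀ p ∈ L, T ∩ p.1 ≠ p.2)).card ≤
        (2 ^ C - 1) ^ L.length * 2 ^ (Λ.card - C * L.length) ∧
      C * L.length ≤ Λ.card := by
  intro L
  induction L with
  | nil =>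
      intro Λ _ _
      constructor
      · calc (Λ.powerset.filter _).card ≤ Λ.powerset.card := Finset.card_filter_le _ _
          _ = 2 ^ Λ.card := Finset.card_powerset Λ
          _ ≤ (2 ^ C - 1) ^ (List.length ([] : List (Finset G × Finset G))) *
              2 ^ (Λ.card - C * (List.length ([] : List (Finset G × Finset G)))) := by
            simp
      · simp
  | cons p L' ih =>
      intro Λ hprops hpw
      obtain ⟨hΩΛ, hσΩ, hcard⟩ := hprops p (List.mem_cons_self (a := p) (l := L'))
      have hdisj : ∀ q ∈ L', Disjoint p.1 q.1 := (List.pairwise_cons.mp hpw).1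
      have hpw' : L'.Pairwise (fun p p' => Disjoint p.1 p'.1) :=
        (List.pairwise_cons.mp hpw).2
      have hprops' : ∀ q ∈ L', q.1 ⊆ Λ \ p.1 ∧ q.2 ⊆ q.1 ∧ q.1.card = C := by
        intro q hq
        obtain ⟨h1, h2, h3⟩ := hprops q (List.mem_cons_of_mem p hq)
        exact ⟨Finset.subset_sdiff.mpr ⟨h1, (hdisj q hq).symm⟩, h2, h3⟩
      have IH := ih (Λ \ p.1) hprops' hpw'
      have hCΛ : C ≤ Λ.card := hcard ▸ Finset.card_le_card hΩΛ
      have hsd : (Λ \ p.1).card = Λ.card - C := by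
        rw [Finset.card_sdiff_of_subset hΩΛ, hcard]
      -- injection into the product
      have hinj : (Λ.powerset.filter
            (fun T => ∀ q ∈ (p :: L'), T ∩ q.1 ≠ q.2)).card ≤
          ((p.1.powerset.erase p.2) ×ˢ ((Λ \ p.1).powerset.filter
            (fun T => ∀ q ∈ L', T ∩ q.1 ≠ q.2))).card := by
        apply Finset.card_le_card_of_injOn (fun T => (T ∩ p.1, T \ p.1))
        · intro T hT
          rw [Finset.mem_coe, Finset.mem_filter, Finset.mem_powerset] at hT
          obtain ⟨hTΛ, hTcond⟩ := hT
          rw [Finset.mem_coe, Finset.mem_product]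
          constructor
          · rw [Finset.mem_erase]
            refine ⟨hTcond p (List.mem_cons_self (a := p) (l := L')), ?_⟩
            rw [Finset.mem_powerset]
            exact Finset.inter_subset_right
          · rw [Finset.mem_filter, Finset.mem_powerset]
            constructor
            · exact Finset.sdiff_subset_sdiff hTΛ (le_refl _)
            · intro q hq
              have : (T \ p.1) ∩ q.1 = T ∩ q.1 := by
                ext a
                simp only [Finset.mem_inter, Finset.mem_sdiff]
                constructor
                · rintro ⟨⟨haT, _⟩, haq⟩; exact ⟨haT, haq⟩
                · rintro ⟨haT, haq⟩
                  exact ⟨⟨haT, fun hap => (Finset.disjoint_left.mp (hdisj q hq)) hap haq⟩, haq⟩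
              rw [this]
              exact hTcond q (List.mem_cons_of_mem p hq)
        · intro T hT T' hT' heq
          simp only [Prod.mk.injEq] at heq
          have hrec : ∀ S : Finset G, S ∩ p.1 ∪ S \ p.1 = S := by
            intro S
            ext a
            simp only [Finset.mem_union, Finset.mem_inter, Finset.mem_sdiff]
            tauto
          have : T ∩ p.1 ∪ T \ p.1 = T' ∩ p.1 ∪ T' \ p.1 := by rw [heq.1, heq.2]
          rwa [hrec, hrec] at this
      have hprodcard : ((p.1.powerset.erase p.2) ×ˢ ((Λ \ p.1).powerset.filter
            (fun T => ∀ q ∈ L', T ∩ q.1 ≠ q.2))).card =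
          (2 ^ C - 1) * ((Λ \ p.1).powerset.filter
            (fun T => ∀ q ∈ L', T ∩ q.1 ≠ q.2)).card := by
        rw [Finset.card_product, Finset.card_erase_of_mem (Finset.mem_powerset.mpr hσΩ),
          Finset.card_powerset, hcard]
      constructor
      · calc (Λ.powerset.filter (fun T => ∀ q ∈ (p :: L'), T ∩ q.1 ≠ q.2)).card
            ≤ (2 ^ C - 1) * ((Λ \ p.1).powerset.filter
              (fun T => ∀ q ∈ L', T ∩ q.1 ≠ q.2)).card := by
              rw [← hprodcard]; exact hinj
          _ ≤ (2 ^ C - 1) * ((2 ^ C - 1) ^ L'.length * 2 ^ ((Λ \ p.1).card - C * L'.length)) := by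
              exact Nat.mul_le_mul_left _ IH.1
          _ = (2 ^ C - 1) ^ (p :: L').length * 2 ^ (Λ.card - C * (p :: L').length) := by
              rw [hsd, List.length_cons, pow_succ, Nat.sub_sub]
              have he : C + C * L'.length = C * (L'.length + 1) := by ring
              rw [he]
              ring
      · have := IH.2
        rw [hsd] at this
        simp only [List.length_cons]
        have he : C * (L'.length + 1) = C * L'.length + C := by ring
        omega
end Part4
section Part5

lemma arith_A1 (q : ℕ) (hq : 1 ≤ q) :
    ∀ n : ℕ, 1 ≤ n → q^n + n * q^(n-1) ≤ (q+1)^n := by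
  intro n
  induction n with
  | zero => omega
  | succ n ih =>
      intro _
      rcases Nat.eq_zero_or_pos n with rfl | hn
      · simp
      · have h1 := ih hn
        have hqq : q^(n-1) * q = q^n := by
          rw [← pow_succ]
          congr 1
          omega
        calc q^(n+1) + (n+1) * q^((n+1)-1)
            = q^(n+1) + (n+1) * q^n := by norm_num
          _ ≤ q^n * q + q^n + n * q^n + n * q^(n-1) := by ring_nf; nlinarith [pow_pos (show 0 < q by omega) n, pow_pos (show 0 < q by omega) (n-1)]
          _ = (q^n + n * q^(n-1)) * (q + 1) := by
              have e1 : n * q^(n-1) * (q+1) = n * q^n + n * q^(n-1) := by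
                rw [mul_add, mul_one, mul_assoc, hqq]
              have e2 : q^n * (q+1) = q^n * q + q^n := by rw [mul_add, mul_one]
              rw [add_mul, e1, e2]
              omega
          _ ≤ (q+1)^n * (q+1) := Nat.mul_le_mul_right _ h1
          _ = (q+1)^(n+1) := (pow_succ _ _).symm

lemma arith_A2 (q : ℕ) (hq : 1 ≤ q) : 2 * q^q ≤ (q+1)^q := by
  have h1 := arith_A1 q hq q hq
  have hqq : q * q^(q-1) = q^q := by
    rw [← pow_succ']
    congr 1
    omega
  calc 2 * q^q = q^q + q^q := by ring
    _ = q^q + q * q^(q-1) := by rw [hqq]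
    _ ≤ (q+1)^q := h1

lemma arith_A3 (q : ℕ) (hq : 1 ≤ q) (k N : ℕ) (hN : N < 2^k) :
    N * q^(q*k) < (q+1)^(q*k) := by
  have h2 : (q+1)^(q*k) = ((q+1)^q)^k := by rw [← pow_mul]
  have h3 : ((q+1)^q)^k ≥ (2 * q^q)^k := Nat.pow_le_pow_left (arith_A2 q hq) k
  have h4 : (2 * q^q)^k = 2^k * (q^q)^k := by rw [mul_pow]
  have h5 : (q^q)^k = q^(q*k) := by rw [← pow_mul]
  have hpos : 0 < q^(q*k) := pow_pos (by omega) _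
  calc N * q^(q*k) < 2^k * q^(q*k) := by
        exact (Nat.mul_lt_mul_right hpos).mpr hN
    _ = (2 * q^q)^k := by rw [h4, h5]
    _ ≤ ((q+1)^q)^k := h3
    _ = (q+1)^(q*k) := h2.symm

lemma arith_A4 (x : ℕ) (hx : 2 ≤ x) :
    (x + 2 * ((2^(2*x) - 1) * 2^(2*(2^(2*x) - 1)) + 2))^200 < 2^(2^(2*(2^(2*x) - 1))) := by
  set q := 2^(2*x) - 1 with hqdef
  have hq15 : 15 ≤ q := by
    have : 2^4 ≤ 2^(2*x) := Nat.pow_le_pow_right (by norm_num) (by omega)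
    omega
  have hxq : x ≤ q := by
    have h1 : x < 2^x := Nat.lt_two_pow_self
    have h2 : 2^x ≤ 2^(2*x) := Nat.pow_le_pow_right (by norm_num) (by omega)
    omega
  have hq2q : q < 2^q := Nat.lt_two_pow_self
  -- x + 2*M ≤ 2^(3q+2)
  have hbound : x + 2 * (q * 2^(2*q) + 2) ≤ 2^(3*q+2) := by
    have h1 : q * 2^(2*q) ≤ 2^q * 2^(2*q) := Nat.mul_le_mul_right _ (le_of_lt hq2q)
    have h2 : (2:ℕ)^q * 2^(2*q) = 2^(3*q) := by
      rw [← pow_add]; congr 1; ring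
    have h3 : x + 2 * (q * 2^(2*q) + 2) ≤ q + 2 * 2^(3*q) + 4 := by
      rw [h2] at h1; omega
    have h4 : q + 4 ≤ 2^(3*q) := by
      have hA : q - 1 < 2^(q-1) := Nat.lt_two_pow_self
      have hC : 2 * 2^(q-1) = 2^q := by
        rw [← pow_succ']
        congr 1
        omega
      have : q + 4 ≤ 2^q := by omega
      calc q + 4 ≤ 2^q := this
        _ ≤ 2^(3*q) := Nat.pow_le_pow_right (by norm_num) (by omega)
    calc x + 2 * (q * 2^(2*q) + 2) ≤ q + 2 * 2^(3*q) + 4 := h3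
      _ ≤ 2^(3*q) + 2 * 2^(3*q) := by omega
      _ ≤ 4 * 2^(3*q) := by omega
      _ = 2^(3*q+2) := by rw [pow_add]; ring
  have hexp : (3*q+2) * 200 < 2^(2*q) := by
    have h1 : (3*q+2)*200 = 600*q + 400 := by ring
    have h2 : 600*q + 400 ≤ 1024*q := by omega
    have h3 : (1024:ℕ)*q = 2^10 * q := by norm_num
    have h4 : (2:ℕ)^10 * q < 2^10 * 2^q :=
      (Nat.mul_lt_mul_left (by norm_num)).mpr hq2q
    have h5 : (2:ℕ)^10 * 2^q = 2^(q+10) := by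
      rw [← pow_add]
      congr 1
      omega
    have h6 : (2:ℕ)^(q+10) ≤ 2^(2*q) := Nat.pow_le_pow_right (by norm_num) (by omega)
    omega
  calc (x + 2 * (q * 2^(2*q) + 2))^200 ≤ (2^(3*q+2))^200 :=
        Nat.pow_le_pow_left hbound 200
    _ = 2^((3*q+2)*200) := by rw [← pow_mul]
    _ < 2^(2^(2*q)) := Nat.pow_lt_pow_right (by norm_num) hexp

end Part5
section Part6
open FTVAux2

lemma arith_final (x NN Lc : ℕ) (hx : 2 ≤ x)
    (hNN : NN ≤ (x + 2*((2^(2*x)-1) * 2^(2*(2^(2*x)-1)) + 2))^100)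
    (hL : (2*x) * ((2^(2*x)-1) * 2^(2*(2^(2*x)-1))) ≤ Lc) :
    NN^2 * ((2^(2*x) - 1)^((2^(2*x)-1) * 2^(2*(2^(2*x)-1))) *
      2^(Lc - (2*x) * ((2^(2*x)-1) * 2^(2*(2^(2*x)-1))))) < 2^Lc := by
  set q := 2^(2*x) - 1 with hqdef
  set kk := 2^(2*q) with hkkdef
  have hq1 : 1 ≤ q := by
    have : (2:ℕ)^4 ≤ 2^(2*x) := Nat.pow_le_pow_right (by norm_num) (by omega)
    omega
  have hNN2 : NN^2 < 2^kk := by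
    calc NN^2 ≤ ((x + 2*(q * kk + 2))^100)^2 := Nat.pow_le_pow_left hNN 2
      _ = (x + 2*(q * kk + 2))^200 := by rw [← pow_mul]
      _ < 2^kk := arith_A4 x hx
  have hA3 := arith_A3 q hq1 kk (NN^2) hNN2
  have hq1' : q + 1 = 2^(2*x) := by
    have : (1:ℕ) ≤ 2^(2*x) := Nat.one_le_two_pow
    omega
  have hqpow : (q+1)^(q*kk) = 2^((2*x)*(q*kk)) := by
    rw [hq1', ← pow_mul]
  calc NN^2 * (q^(q*kk) * 2^(Lc - (2*x)*(q*kk)))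
      = (NN^2 * q^(q*kk)) * 2^(Lc - (2*x)*(q*kk)) := by ring
    _ < (q+1)^(q*kk) * 2^(Lc - (2*x)*(q*kk)) := by
        apply (Nat.mul_lt_mul_right (Nat.pow_pos (by norm_num))).mpr
        exact hA3
    _ = 2^((2*x)*(q*kk)) * 2^(Lc - (2*x)*(q*kk)) := by rw [hqpow]
    _ = 2^((2*x)*(q*kk) + (Lc - (2*x)*(q*kk))) := by rw [pow_add]
    _ = 2^Lc := by congr 1; omega

variable {G : Type} [Group G] [DecidableEq G]
set_option linter.unusedSectionVars false

lemma subset_pow {Y : Finset G} (hY : (1:G) ∈ Y) {n : ℕ} (hn : 1 ≤ n) :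
    Y ⊆ Y ^ n := by
  obtain ⟨m, rfl⟩ := Nat.le.dest hn
  clear hn
  induction m with
  | zero => rw [pow_one]
  | succ m ih =>
      intro a ha
      have : a * 1 ∈ Y^(1+m) * Y := Finset.mul_mem_mul (ih ha) hY
      rw [mul_one] at this
      rw [show 1 + (m+1) = (1+m)+1 by omega, pow_succ]
      exact this

end Part6
section Part7
open FTVAux2

lemma arith_final' (x NN Lc q kk M : ℕ) (hx : 2 ≤ x) (hq : q = 2^(2*x) - 1)
    (hkk : kk = 2^(2*q)) (hM : M = q*kk + 2)
    (hNN : NN ≤ (x + 2*M)^100) (hL : (2*x) * (q*kk) ≤ Lc) :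
    NN^2 * ((2^(2*x) - 1)^(q*kk) * 2^(Lc - (2*x)*(q*kk))) < 2^Lc := by
  subst hq hkk hM
  exact arith_final x NN Lc hx hNN hL

set_option maxRecDepth 40000 in
set_option maxHeartbeats 1600000 in
/-- Let `G` be a countable ICC group and `X ⊆ G` a finite symmetric subset containing the
identity with `|X| ≥ 2`.  Then there exist a configuration `s ∈ 2^G` and a finite symmetric
`Y ⊇ X` such that (1) distinct `a, b` with `s a = s b = 1` are `X`-apart, and (2) for every
`g, h ∈ Y^100` there is `a ∈ Y` with `s (g * a) = 1` and `s (h * a) = 1`. -/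
theorem exists_finite_witness_configuration
    (G : Type) [Group G] [Countable G] [DecidableEq G] (hICC : IsICC G)
    (X : Finset G) (hXsym : ∀ x ∈ X, x⁻¹ ∈ X) (hXone : (1 : G) ∈ X)
    (hXcard : 2 ≤ X.card) :
    ∃ (s : G → Fin 2) (Y : Finset G),
      X ⊆ Y ∧ (∀ y ∈ Y, y⁻¹ ∈ Y) ∧
      (∀ a b : G, s a = 1 → s b = 1 → a ≠ b → XApart X a b) ∧
      (∀ g ∈ Y ^ (100 : ℕ), ∀ h ∈ Y ^ (100 : ℕ),
        ∃ a ∈ Y, s (g * a) = 1 ∧ s (h * a) = 1) := by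
  classical
  set x := X.card with hxdef
  have hx2 : 2 ≤ x := hXcard
  set q : ℕ := 2^(2*x) - 1 with hq
  set kk : ℕ := 2^(2*q) with hkk
  set M : ℕ := q * kk + 2 with hM
  obtain ⟨v, hgood⟩ := exists_goodSeq hICC X M
  set W : Finset G := (Finset.range M).image v with hW
  set Y : Finset G := X ∪ W ∪ W⁻¹ with hY
  set P : Finset G := Y ^ (100:ℕ) with hP
  set Lam : Finset G := P * W * X with hLam
  have hXY : X ⊆ Y := fun a ha => Finset.mem_union_left _ (Finset.mem_union_left _ ha)
  have hWY : W ⊆ Y := fun a ha => Finset.mem_union_left _ (Finset.mem_union_right _ ha)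
  have h1Y : (1:G) ∈ Y := hXY hXone
  have hYP : Y ⊆ P := subset_pow h1Y (by norm_num)
  have hvW : ∀ k, k < M → v k ∈ W :=
    fun k hk => Finset.mem_image_of_mem v (Finset.mem_range.mpr hk)
  have hsymY : ∀ y ∈ Y, y⁻¹ ∈ Y := by
    intro y hy
    rcases Finset.mem_union.mp hy with hy' | hy'
    · rcases Finset.mem_union.mp hy' with hy'' | hy''
      · exact hXY (hXsym y hy'')
      · exact Finset.mem_union_right _ (Finset.inv_mem_inv hy'')
    · obtain ⟨b, hb, hbe⟩ := Finset.mem_inv.mp hy'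
      have : y⁻¹ = b := by rw [← hbe, inv_inv]
      rw [this]
      exact hWY hb
  have hXXone : ∀ xx ∈ X, xx ∈ X*X := by
    intro xx hxx
    have := Finset.mul_mem_mul hxx hXone
    rwa [mul_one] at this
  have hXXinv : ∀ xx ∈ X, xx⁻¹ ∈ X*X := fun xx hxx => hXXone _ (hXsym xx hxx)
  -- bad sets
  have hBex : ∀ pr : G × G, ∃ B : Finset ℕ, B.card ≤ 2 ∧
      (pr.1⁻¹ * pr.2 ≠ 1 → ∀ k l : ℕ, k < M → l < M → k ∉ B → l ∉ B →
        ∀ z ∈ X*X, pr.1⁻¹ * pr.2 ≠ v k * z * (v l)⁻¹) := by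
    intro pr
    by_cases hex : ∃ a b : ℕ, a < M ∧ b < M ∧ ∃ z ∈ X*X,
        pr.1⁻¹ * pr.2 = v a * z * (v b)⁻¹
    · obtain ⟨a, b, ha, hb, za, hza, hEa⟩ := hex
      refine ⟨{a, b}, le_trans (Finset.card_insert_le _ _) (by simp), ?_⟩
      intro hu k l hk hl hkB hlB z hz hEk
      have hE : v k * z * (v l)⁻¹ = v a * za * (v b)⁻¹ := by rw [← hEk, ← hEa]
      have hu' : v k * z * (v l)⁻¹ ≠ 1 := by rw [← hEk]; exact hu
      rcases cross hgood hXsym hk hl ha hb hz hza hE hu' with h | h | h | h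
      · exact hkB (by simp [h])
      · exact hlB (by simp [h])
      · exact hkB (by simp [h])
      · exact hlB (by simp [h])
    · exact ⟨∅, by simp, fun hu k l hk hl _ _ z hz hE => hex ⟨k, l, hk, hl, z, hz, hE⟩⟩
  choose Bf hBcard hBprop using hBex
  -- K lists
  set Kl : G × G → List ℕ := fun pr =>
    ((Finset.range M).filter (fun i => i ∉ Bf pr)).toList.take (q*kk) with hKl
  have hKlen : ∀ pr, (Kl pr).length = q * kk := by
    intro pr
    rw [hKl]
    rw [List.length_take, Finset.length_toList]
    have h1 : (Finset.range M).filter (fun i => i ∉ Bf pr) = Finset.range M \ Bf pr :=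
      (Finset.sdiff_eq_filter _ _).symm
    have h2 := Finset.card_le_card_sdiff_add_card (s := Finset.range M) (t := Bf pr)
    rw [Finset.card_range] at h2
    have hB := hBcard pr
    rw [h1]
    omega
  have hKmem : ∀ pr k, k ∈ Kl pr → k < M ∧ k ∉ Bf pr := by
    intro pr k hk
    rw [hKl] at hk
    have : k ∈ (Finset.range M).filter (fun i => i ∉ Bf pr) := by
      rw [← Finset.mem_toList]
      exact List.take_subset _ _ hk
    rw [Finset.mem_filter, Finset.mem_range] at this
    exact this
  have hKnodup : ∀ pr, (Kl pr).Nodup := by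
    intro pr
    rw [hKl]
    exact List.Nodup.sublist (List.take_sublist _ _) (Finset.nodup_toList _)
  -- blocks
  set Of : G × G → ℕ → Finset G := fun pr k =>
    (pr.1 * v k) • X ∪ (pr.2 * v k) • X with hOf
  set sf : G × G → ℕ → Finset G := fun pr k =>
    ({pr.1 * v k, pr.2 * v k} : Finset G) with hsf
  set Lf : G × G → List (Finset G × Finset G) := fun pr =>
    (Kl pr).map (fun k => (Of pr k, sf pr k)) with hLf
  -- disjointness facts
  have hdisjkl : ∀ (g h : G), g ≠ h → ∀ k l, k < M → l < M →
      k ∉ Bf (g,h) → l ∉ Bf (g,h) →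
      Disjoint ((g * v k) • X) ((h * v l) • X) := by
    intro g h hne k l hk hl hkB hlB
    rw [Finset.disjoint_left]
    intro a hak hal
    rw [Finset.mem_smul_finset] at hak hal
    obtain ⟨x1, hx1, he1⟩ := hak
    obtain ⟨x2, hx2, he2⟩ := hal
    rw [smul_eq_mul] at he1 he2
    have hu : g⁻¹ * h ≠ 1 := fun hcon => hne (inv_mul_eq_one.mp hcon)
    refine hBprop (g,h) hu k l hk hl hkB hlB (x1 * x2⁻¹)
      (Finset.mul_mem_mul hx1 (hXsym x2 hx2)) ?_
    have he : g * v k * x1 = h * v l * x2 := by rw [he1, he2]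
    show g⁻¹ * h = v k * (x1 * x2⁻¹) * (v l)⁻¹
    have h2 : h = g * (v k * (x1 * x2⁻¹) * (v l)⁻¹) := by
      have h3 : h = (h * v l * x2) * x2⁻¹ * (v l)⁻¹ := by group
      rw [h3, ← he]
      group
    rw [h2]
    group
  have hdisjsame : ∀ (g : G), ∀ k l, k < M → l < M → k ≠ l →
      Disjoint ((g * v k) • X) ((g * v l) • X) := by
    intro g k l hk hl hne
    rw [Finset.disjoint_left]
    intro a hak hal
    rw [Finset.mem_smul_finset] at hak hal
    obtain ⟨x1, hx1, he1⟩ := hak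
    obtain ⟨x2, hx2, he2⟩ := hal
    rw [smul_eq_mul] at he1 he2
    have he : g * v k * x1 = g * v l * x2 := by rw [he1, he2]
    refine sameside hgood hXsym hk hl hne
      (z := x1 * x2⁻¹) (Finset.mul_mem_mul hx1 (hXsym x2 hx2)) ?_
    have h3 : g * v l = g * (v k * (x1 * x2⁻¹)) := by
      have h4 : g * v l = (g * v l * x2) * x2⁻¹ := by group
      rw [h4, ← he]
      group
    have := mul_left_cancel h3
    rw [this]
  -- block properties
  have hblocks : ∀ pr : G × G, pr.1 ∈ P → pr.2 ∈ P → pr.1 ≠ pr.2 →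
      (∀ p ∈ Lf pr, p.1 ⊆ Lam ∧ p.2 ⊆ p.1 ∧ p.1.card = 2*x) ∧
      (Lf pr).Pairwise (fun p p' => Disjoint p.1 p'.1) := by
    intro pr hg hh hne
    constructor
    · intro p hp
      rw [hLf, List.mem_map] at hp
      obtain ⟨k, hkK, rfl⟩ := hp
      obtain ⟨hkM, hkB⟩ := hKmem pr k hkK
      refine ⟨?_, ?_, ?_⟩
      · intro a ha
        rcases Finset.mem_union.mp ha with ha' | ha'
        · rw [Finset.mem_smul_finset] at ha'
          obtain ⟨x1, hx1, he⟩ := ha'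
          rw [smul_eq_mul] at he
          rw [← he]
          exact Finset.mul_mem_mul (Finset.mul_mem_mul hg (hvW k hkM)) hx1
        · rw [Finset.mem_smul_finset] at ha'
          obtain ⟨x1, hx1, he⟩ := ha'
          rw [smul_eq_mul] at he
          rw [← he]
          exact Finset.mul_mem_mul (Finset.mul_mem_mul hh (hvW k hkM)) hx1
      · intro a ha
        rcases Finset.mem_insert.mp ha with rfl | ha'
        · exact Finset.mem_union_left _
            (Finset.mem_smul_finset.mpr ⟨1, hXone, by rw [smul_eq_mul, mul_one]⟩)
        · rw [Finset.mem_singleton] at ha'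
          rw [ha']
          exact Finset.mem_union_right _
            (Finset.mem_smul_finset.mpr ⟨1, hXone, by rw [smul_eq_mul, mul_one]⟩)
      · show ((pr.1 * v k) • X ∪ (pr.2 * v k) • X).card = 2*x
        rw [Finset.card_union_of_disjoint
          (hdisjkl pr.1 pr.2 hne k k hkM hkM hkB hkB)]
        rw [Finset.card_smul_finset, Finset.card_smul_finset]
        omega
    · rw [hLf]
      rw [List.pairwise_map]
      apply List.Nodup.pairwise_of_forall_ne (hKnodup pr)
      intro k hkK l hlK hkl
      obtain ⟨hkM, hkB⟩ := hKmem pr k hkK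
      obtain ⟨hlM, hlB⟩ := hKmem pr l hlK
      show Disjoint ((pr.1 * v k) • X ∪ (pr.2 * v k) • X)
        ((pr.1 * v l) • X ∪ (pr.2 * v l) • X)
      rw [Finset.disjoint_union_left]
      constructor <;> rw [Finset.disjoint_union_right] <;> constructor
      · exact hdisjsame pr.1 k l hkM hlM hkl
      · exact hdisjkl pr.1 pr.2 hne k l hkM hlM hkB hlB
      · exact (hdisjkl pr.1 pr.2 hne l k hlM hkM hlB hkB).symm
      · exact hdisjsame pr.2 k l hkM hlM hkl
  -- pair set
  set PP : Finset (G × G) := (P ×ˢ P).filter (fun pr => pr.1 ≠ pr.2) with hPP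
  have hLflen : ∀ pr, (Lf pr).length = q * kk := by
    intro pr
    rw [hLf, List.length_map]
    exact hKlen pr
  have hcount : ∀ pr ∈ PP,
      (Lam.powerset.filter (fun T => ∀ p ∈ Lf pr, T ∩ p.1 ≠ p.2)).card ≤
      (2^(2*x) - 1)^(q*kk) * 2^(Lam.card - (2*x)*(q*kk)) := by
    intro pr hpr
    rw [hPP, Finset.mem_filter, Finset.mem_product] at hpr
    obtain ⟨⟨hg, hh⟩, hne⟩ := hpr
    have hb := hblocks pr hg hh hne
    have hc := (counting (C := 2*x) (Lf pr) Lam hb.1 hb.2).1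
    rwa [hLflen pr] at hc
  -- a nonempty pair
  obtain ⟨x₀, hx₀X, hx₀ne⟩ := Finset.exists_mem_ne (s := X) (by omega) (1:G)
  have hx₀P : x₀ ∈ P := hYP (hXY hx₀X)
  have h1P : (1:G) ∈ P := hYP h1Y
  have hpr0 : ((1:G), x₀) ∈ PP := by
    rw [hPP, Finset.mem_filter, Finset.mem_product]
    exact ⟨⟨h1P, hx₀P⟩, Ne.symm hx₀ne⟩
  have hLamcard : (2*x) * (q*kk) ≤ Lam.card := by
    have hb := hblocks ((1:G), x₀) h1P hx₀P (Ne.symm hx₀ne)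
    have hc := (counting (C := 2*x) (Lf ((1:G), x₀)) Lam hb.1 hb.2).2
    rwa [hLflen] at hc
  -- cardinality of P
  have hNNbound : P.card ≤ (x + 2*M)^100 := by
    have hWcard : W.card ≤ M := le_trans Finset.card_image_le (by rw [Finset.card_range])
    have hYcard : Y.card ≤ x + 2*M := by
      have h1 : Y.card ≤ (X ∪ W).card + W⁻¹.card := Finset.card_union_le _ _
      have h2 : (X ∪ W).card ≤ X.card + W.card := Finset.card_union_le _ _
      have h3 : (W⁻¹ : Finset G).card = W.card := Finset.card_inv W
      omega
    calc P.card ≤ Y.card^100 := Finset.card_pow_le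
      _ ≤ (x + 2*M)^100 := Nat.pow_le_pow_left hYcard _
  -- the bad collection of colourings
  set Bad : Finset (Finset G) := Lam.powerset.filter
    (fun T => ∃ pr ∈ PP, ∀ p ∈ Lf pr, T ∩ p.1 ≠ p.2) with hBad
  have hBadcard : Bad.card < Lam.powerset.card := by
    have hsub : Bad ⊆ PP.biUnion
        (fun pr => Lam.powerset.filter (fun T => ∀ p ∈ Lf pr, T ∩ p.1 ≠ p.2)) := by
      intro T hT
      rw [hBad, Finset.mem_filter] at hT
      obtain ⟨hT1, pr, hpr, hcond⟩ := hT
      exact Finset.mem_biUnion.mpr ⟨pr, hpr, Finset.mem_filter.mpr ⟨hT1, hcond⟩⟩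
    have hPPcard : PP.card ≤ P.card * P.card := by
      calc PP.card ≤ (P ×ˢ P).card := Finset.card_filter_le _ _
        _ = P.card * P.card := Finset.card_product _ _
    calc Bad.card ≤ _ := Finset.card_le_card hsub
      _ ≤ ∑ pr ∈ PP, (Lam.powerset.filter
          (fun T => ∀ p ∈ Lf pr, T ∩ p.1 ≠ p.2)).card := Finset.card_biUnion_le
      _ ≤ ∑ _pr ∈ PP, ((2^(2*x)-1)^(q*kk) * 2^(Lam.card - (2*x)*(q*kk))) :=
          Finset.sum_le_sum hcount
      _ = PP.card * ((2^(2*x)-1)^(q*kk) * 2^(Lam.card - (2*x)*(q*kk))) := by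
          rw [Finset.sum_const, smul_eq_mul]
      _ ≤ (P.card * P.card) * ((2^(2*x)-1)^(q*kk) * 2^(Lam.card - (2*x)*(q*kk))) :=
          Nat.mul_le_mul_right _ hPPcard
      _ = P.card^2 * ((2^(2*x)-1)^(q*kk) * 2^(Lam.card - (2*x)*(q*kk))) := by ring_nf
      _ < 2^Lam.card := arith_final' x P.card Lam.card q kk M hx2 hq hkk hM
          hNNbound hLamcard
      _ = Lam.powerset.card := (Finset.card_powerset Lam).symm
  have hexT : ∃ T ∈ Lam.powerset, T ∉ Bad := by
    by_contra hcon
    push_neg at hcon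
    have hsub2 : Lam.powerset ⊆ Bad := fun T hT => hcon T hT
    exact absurd (Finset.card_le_card hsub2) (by omega)
  obtain ⟨T, hTLam, hTBad⟩ := hexT
  have hTgood : ∀ pr ∈ PP, ∃ p ∈ Lf pr, T ∩ p.1 = p.2 := by
    intro pr hpr
    by_contra hcon
    push_neg at hcon
    exact hTBad (by
      rw [hBad, Finset.mem_filter]
      exact ⟨hTLam, pr, hpr, hcon⟩)
  -- the colouring
  set Spred : G → Prop := fun p => p ∈ T ∧ ∀ xx ∈ X, xx ≠ 1 → p * xx ∉ T with hSpred
  -- main coverage for genuine pairs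
  have hmain : ∀ g h : G, (g, h) ∈ PP → ∃ a ∈ Y,
      Spred (g * a) ∧ Spred (h * a) := by
    intro g h hpr
    have hpr' := hpr
    rw [hPP, Finset.mem_filter, Finset.mem_product] at hpr'
    obtain ⟨⟨hg, hh⟩, hne⟩ := hpr'
    dsimp only at hg hh hne
    obtain ⟨p, hpL, hpeq⟩ := hTgood (g, h) hpr
    rw [hLf, List.mem_map] at hpL
    obtain ⟨k, hkK, rfl⟩ := hpL
    dsimp only at hpeq
    obtain ⟨hkM, hkB⟩ := hKmem (g, h) k hkK
    have hu : g⁻¹ * h ≠ 1 := fun hcon => hne (inv_mul_eq_one.mp hcon)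
    have hOe : Of (g, h) k = (g * v k) • X ∪ (h * v k) • X := by rw [hOf]
    have hse : sf (g, h) k = ({g * v k, h * v k} : Finset G) := by rw [hsf]
    rw [hOe, hse] at hpeq
    have hmem1 : g * v k ∈ T := by
      have h1 : g * v k ∈ ({g * v k, h * v k} : Finset G) := Finset.mem_insert_self _ _
      rw [← hpeq] at h1
      exact (Finset.mem_inter.mp h1).1
    have hmem2 : h * v k ∈ T := by
      have h1 : h * v k ∈ ({g * v k, h * v k} : Finset G) :=
        Finset.mem_insert_of_mem (Finset.mem_singleton_self _)
      rw [← hpeq] at h1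
      exact (Finset.mem_inter.mp h1).1
    refine ⟨v k, hWY (hvW k hkM), ⟨hmem1, ?_⟩, ⟨hmem2, ?_⟩⟩
    · intro xx hxx hxxne hmemT
      have hmemO : g * v k * xx ∈ (g * v k) • X ∪ (h * v k) • X :=
        Finset.mem_union_left _
          (Finset.mem_smul_finset.mpr ⟨xx, hxx, by rw [smul_eq_mul]⟩)
      have hmemσ : g * v k * xx ∈ ({g * v k, h * v k} : Finset G) := by
        rw [← hpeq]
        exact Finset.mem_inter.mpr ⟨hmemT, hmemO⟩
      rcases Finset.mem_insert.mp hmemσ with he | he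
      · apply hxxne
        have h5 : g * v k * xx = g * v k * 1 := by rw [mul_one]; exact he
        exact mul_left_cancel h5
      · rw [Finset.mem_singleton] at he
        refine absurd ?_ (hBprop (g, h) hu k k hkM hkM hkB hkB xx (hXXone xx hxx))
        show g⁻¹ * h = v k * xx * (v k)⁻¹
        have h3 : h = (h * v k) * (v k)⁻¹ := by group
        rw [← he] at h3
        rw [h3]; group
    · intro xx hxx hxxne hmemT
      have hmemO : h * v k * xx ∈ (g * v k) • X ∪ (h * v k) • X :=
        Finset.mem_union_right _
          (Finset.mem_smul_finset.mpr ⟨xx, hxx, by rw [smul_eq_mul]⟩)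
      have hmemσ : h * v k * xx ∈ ({g * v k, h * v k} : Finset G) := by
        rw [← hpeq]
        exact Finset.mem_inter.mpr ⟨hmemT, hmemO⟩
      rcases Finset.mem_insert.mp hmemσ with he | he
      · refine absurd ?_ (hBprop (g, h) hu k k hkM hkM hkB hkB xx⁻¹ (hXXinv xx hxx))
        show g⁻¹ * h = v k * xx⁻¹ * (v k)⁻¹
        have h3 : g = (g * v k) * (v k)⁻¹ := by group
        rw [← he] at h3
        rw [h3]; group
      · rw [Finset.mem_singleton] at he
        apply hxxne
        have h5 : h * v k * xx = h * v k * 1 := by rw [mul_one]; exact he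
        exact mul_left_cancel h5
  refine ⟨fun p => if Spred p then 1 else 0, Y, hXY, hsymY, ?_, ?_⟩
  · -- separation
    intro a b ha hb hab
    have hSa : Spred a := by
      by_contra hcon
      rw [show ((fun p => if Spred p then (1:Fin 2) else 0) a)
        = (if Spred a then (1:Fin 2) else 0) from rfl, if_neg hcon] at ha
      exact absurd ha (by decide)
    have hSb : Spred b := by
      by_contra hcon
      rw [show ((fun p => if Spred p then (1:Fin 2) else 0) b)
        = (if Spred b then (1:Fin 2) else 0) from rfl, if_neg hcon] at hb
      exact absurd hb (by decide)
    intro hmem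
    have hne1 : a⁻¹ * b ≠ 1 := fun hcon => hab (inv_mul_eq_one.mp hcon)
    apply hSa.2 (a⁻¹ * b) hmem hne1
    have heq : a * (a⁻¹ * b) = b := by group
    rw [heq]
    exact hSb.1
  · -- coverage
    intro g hg h hh
    by_cases hgh : g = h
    · subst hgh
      by_cases hg1 : g = 1
      · have hpr : (g, x₀) ∈ PP := by
          rw [hPP, Finset.mem_filter, Finset.mem_product]
          refine ⟨⟨hg, hx₀P⟩, ?_⟩
          show g ≠ x₀
          rw [hg1]
          exact Ne.symm hx₀ne
        obtain ⟨a, haY, h1, _⟩ := hmain g x₀ hpr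
        refine ⟨a, haY, ?_, ?_⟩ <;>
          · show (if Spred (g * a) then (1:Fin 2) else 0) = 1
            exact if_pos h1
      · have hpr : (g, (1:G)) ∈ PP := by
          rw [hPP, Finset.mem_filter, Finset.mem_product]
          exact ⟨⟨hg, h1P⟩, hg1⟩
        obtain ⟨a, haY, h1, _⟩ := hmain g (1:G) hpr
        refine ⟨a, haY, ?_, ?_⟩ <;>
          · show (if Spred (g * a) then (1:Fin 2) else 0) = 1
            exact if_pos h1
    · have hpr : (g, h) ∈ PP := by
        rw [hPP, Finset.mem_filter, Finset.mem_product]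
        exact ⟨⟨hg, hh⟩, hgh⟩
      obtain ⟨a, haY, h1, h2⟩ := hmain g h hpr
      refine ⟨a, haY, ?_, ?_⟩
      · show (if Spred (g * a) then (1:Fin 2) else 0) = 1
        exact if_pos h1
      · show (if Spred (h * a) then (1:Fin 2) else 0) = 1
        exact if_pos h2

end Part7
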